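/- Let x_1, …, x_s ∈ F_{q^m} be linearly independent over F_q and y_1, …, y_s ∈ F_{q^m}, and let t = ⌊s/2⌋. Define x̃_i = M_B(x_i) for i ≤ t and x̃_i = M_A(x_i) for i > t, where A = ⟨x_1,…,x_t⟩, B = ⟨x_{t+1},…,x_s⟩, and M_V denotes the minimal subspace polynomial of V. Then the unique interpolation polynomial I of q-degree < s with I(x_i) = y_i satisfies I = I_1 · M_B + I_2 · M_A, where I_1 is the interpolation polynomial on {(x̃_i, y_i)}_{i=1}^{t} and I_2 is the interpolation polynomial on {(x̃_i, y_i)}_{i=t+1}^{s}. -/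

import Mathlib

open Polynomial

/-- Multiplication of linearized polynomials, in the coefficient representation where the
polynomial `∑ aᵢ Xⁱ` represents the linearized polynomial `∑ aᵢ x^(qⁱ)`:
`(a·b)ᵢ = ∑_{j≤i} aⱼ (b_{i-j})^(qʲ)`. -/
noncomputable def lmul {F : Type*} [Field F] (q : ℕ) (a b : Polynomial F) : Polynomial F :=
  ∑ i ∈ Finset.range (a.natDegree + b.natDegree + 1),
    Polynomial.C (∑ j ∈ Finset.range (i + 1), a.coeff j * (b.coeff (i - j)) ^ q ^ j) *
      Polynomial.X ^ i

/-- Evaluation of the linearized polynomial represented by `a`: `a(α) = ∑ aᵢ α^(qⁱ)`. -/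
noncomputable def leval {F : Type*} [Field F] (q : ℕ) (a : Polynomial F) (α : F) : F :=
  ∑ i ∈ Finset.range (a.natDegree + 1), a.coeff i * α ^ q ^ i

/-- `M` is the minimal subspace polynomial of the `Fq`-subspace `U` of `F`:
`M` is monic, its q-degree equals `dim U`, and its root space is exactly `U`. -/
def IsMSP (Fq : Type*) {F : Type*} [Field Fq] [Field F] [Algebra Fq F] (q : ℕ)
    (U : Submodule Fq F) (M : Polynomial F) : Prop :=
  M.Monic ∧ M.natDegree = Module.finrank Fq U ∧ ∀ α : F, leval q M α = 0 ↔ α ∈ U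

section Aux

variable {F : Type*} [Field F] {q : ℕ}

lemma leval_eq_sum (a : Polynomial F) (α : F) {N : ℕ} (h : a.natDegree < N) :
    _root_.leval q a α = ∑ i ∈ Finset.range N, a.coeff i * α ^ q ^ i := by
  unfold _root_.leval
  apply Finset.sum_subset (Finset.range_subset_range.2 h)
  intro i _ hi
  rw [Finset.mem_range, not_lt] at hi
  rw [Polynomial.coeff_eq_zero_of_natDegree_lt (by omega), zero_mul]

lemma leval_sub (a b : Polynomial F) (α : F) :
    _root_.leval q (a - b) α = _root_.leval q a α - _root_.leval q b α := by
  set N := max (a - b).natDegree (max a.natDegree b.natDegree) + 1 with hN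
  rw [leval_eq_sum (N := N) (a - b) α (by omega), leval_eq_sum (N := N) a α (by omega),
    leval_eq_sum (N := N) b α (by omega), ← Finset.sum_sub_distrib]
  exact Finset.sum_congr rfl fun i _ => by rw [Polynomial.coeff_sub, sub_mul]

lemma leval_add (a b : Polynomial F) (α : F) :
    _root_.leval q (a + b) α = _root_.leval q a α + _root_.leval q b α := by
  set N := max (a + b).natDegree (max a.natDegree b.natDegree) + 1 with hN
  rw [leval_eq_sum (N := N) (a + b) α (by omega), leval_eq_sum (N := N) a α (by omega),
    leval_eq_sum (N := N) b α (by omega), ← Finset.sum_add_distrib]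
  exact Finset.sum_congr rfl fun i _ => by rw [Polynomial.coeff_add, add_mul]

lemma frob_pow (hadd : ∀ x y : F, (x + y) ^ q = x ^ q + y ^ q) (j : ℕ) (x y : F) :
    (x + y) ^ q ^ j = x ^ q ^ j + y ^ q ^ j := by
  induction j generalizing x y with
  | zero => simp
  | succ j ih => rw [pow_succ, pow_mul, pow_mul, pow_mul, ih, hadd]

lemma leval_add_arg (hadd : ∀ x y : F, (x + y) ^ q = x ^ q + y ^ q)
    (P : Polynomial F) (α β : F) :
    _root_.leval q P (α + β) = _root_.leval q P α + _root_.leval q P β := by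
  unfold _root_.leval
  rw [← Finset.sum_add_distrib]
  exact Finset.sum_congr rfl fun i _ => by rw [frob_pow hadd, mul_add]

lemma leval_zero_arg (hq2 : 2 ≤ q) (a : Polynomial F) : _root_.leval q a 0 = 0 := by
  unfold _root_.leval
  apply Finset.sum_eq_zero
  intro i _
  rw [zero_pow (Nat.pow_pos (show 0 < q by omega)).ne', mul_zero]

lemma lmul_coeff (a b : Polynomial F) (k : ℕ) :
    (lmul q a b).coeff k =
      if k < a.natDegree + b.natDegree + 1 then
        ∑ j ∈ Finset.range (k + 1), a.coeff j * b.coeff (k - j) ^ q ^ j else 0 := by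
  unfold lmul
  rw [Polynomial.finset_sum_coeff]
  simp only [Polynomial.coeff_C_mul, Polynomial.coeff_X_pow, mul_ite, mul_one, mul_zero]
  rw [Finset.sum_ite_eq (Finset.range _) k]
  simp [Finset.mem_range]

lemma natDegree_lmul_le (a b : Polynomial F) :
    (lmul q a b).natDegree ≤ a.natDegree + b.natDegree := by
  unfold lmul
  apply Polynomial.natDegree_sum_le_of_forall_le
  intro i hi
  exact (Polynomial.natDegree_C_mul_X_pow_le _ _).trans (by
    simpa using Nat.lt_succ_iff.mp (Finset.mem_range.mp hi))

lemma lmul_zero_left (b : Polynomial F) : lmul q 0 b = 0 := by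
  unfold lmul
  simp

lemma triangle_sum {M : Type*} [AddCommMonoid M] (N : ℕ) (g : ℕ → ℕ → M) :
    ∑ i ∈ Finset.range N, ∑ j ∈ Finset.range (i + 1), g j (i - j)
      = ∑ j ∈ Finset.range N, ∑ k ∈ Finset.range (N - j), g j k := by
  rw [Finset.sum_sigma', Finset.sum_sigma']
  refine Finset.sum_bij' (fun p _ => (⟨p.2, p.1 - p.2⟩ : Σ _ : ℕ, ℕ))
    (fun p _ => (⟨p.1 + p.2, p.1⟩ : Σ _ : ℕ, ℕ)) ?_ ?_ ?_ ?_ ?_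
  · intro p hp
    simp only [Finset.mem_sigma, Finset.mem_range] at hp ⊢
    omega
  · intro p hp
    simp only [Finset.mem_sigma, Finset.mem_range] at hp ⊢
    omega
  · intro p hp
    simp only [Finset.mem_sigma, Finset.mem_range] at hp
    refine Sigma.ext ?_ (heq_of_eq ?_) <;> simp <;> omega
  · intro p hp
    simp only [Finset.mem_sigma, Finset.mem_range] at hp
    refine Sigma.ext ?_ (heq_of_eq ?_) <;> simp <;> omega
  · intro p hp
    simp only [Finset.mem_sigma, Finset.mem_range] at hp
    rfl

lemma leval_lmul (hq2 : 2 ≤ q) (hadd : ∀ x y : F, (x + y) ^ q = x ^ q + y ^ q)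
    (a b : Polynomial F) (α : F) :
    _root_.leval q (lmul q a b) α = _root_.leval q a (_root_.leval q b α) := by
  classical
  have hqj : ∀ j : ℕ, q ^ j ≠ 0 := fun j => (Nat.pow_pos (show 0 < q by omega)).ne'
  have hpow : ∀ (j : ℕ) (x y : F), (x + y) ^ q ^ j = x ^ q ^ j + y ^ q ^ j := by
    intro j
    induction j with
    | zero => intro x y; simp
    | succ j ih =>
      intro x y
      rw [pow_succ, pow_mul, pow_mul, pow_mul, ih, hadd]
  have hsum : ∀ (j : ℕ) {ι : Type} (s : Finset ι) (f : ι → F),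
      (∑ i ∈ s, f i) ^ q ^ j = ∑ i ∈ s, f i ^ q ^ j := by
    intro j ι s f
    induction s using Finset.induction with
    | empty => simp [zero_pow (hqj j)]
    | @insert a s h ih =>
      rw [Finset.sum_insert h, hpow, ih, Finset.sum_insert h]
  set da := a.natDegree with hda
  set db := b.natDegree with hdb
  set N := da + db + 1 with hNdef
  set g : ℕ → ℕ → F := fun j k => a.coeff j * b.coeff k ^ q ^ j * α ^ q ^ (j + k) with hg
  have lhs_eq : _root_.leval q (lmul q a b) α
      = ∑ j ∈ Finset.range N, ∑ k ∈ Finset.range (N - j), g j k := by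
    rw [leval_eq_sum (N := N) (lmul q a b) α (lt_of_le_of_lt (natDegree_lmul_le a b) (by omega))]
    rw [← triangle_sum]
    apply Finset.sum_congr rfl
    intro i hi
    rw [Finset.mem_range] at hi
    rw [lmul_coeff, if_pos hi, Finset.sum_mul]
    apply Finset.sum_congr rfl
    intro j hj
    rw [Finset.mem_range] at hj
    simp only [hg]
    rw [Nat.add_sub_cancel' (show j ≤ i by omega)]
  have rhs_eq : _root_.leval q a (_root_.leval q b α)
      = ∑ j ∈ Finset.range (da + 1), ∑ k ∈ Finset.range (db + 1), g j k := by
    unfold _root_.leval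
    rw [← hda, ← hdb]
    apply Finset.sum_congr rfl
    intro j _
    rw [hsum, Finset.mul_sum]
    apply Finset.sum_congr rfl
    intro k _
    simp only [hg]
    rw [mul_pow, ← pow_mul, ← pow_add, mul_assoc, add_comm k j]
  rw [lhs_eq, rhs_eq]
  symm
  calc ∑ j ∈ Finset.range (da + 1), ∑ k ∈ Finset.range (db + 1), g j k
      = ∑ j ∈ Finset.range (da + 1), ∑ k ∈ Finset.range (N - j), g j k := by
        apply Finset.sum_congr rfl
        intro j hj
        rw [Finset.mem_range] at hj
        apply Finset.sum_subset (Finset.range_subset_range.2 (by omega))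
        intro k _ hk
        rw [Finset.mem_range, not_lt] at hk
        simp only [hg]
        rw [Polynomial.coeff_eq_zero_of_natDegree_lt (show db < k by omega),
          zero_pow (hqj j), mul_zero, zero_mul]
    _ = ∑ j ∈ Finset.range N, ∑ k ∈ Finset.range (N - j), g j k := by
        apply Finset.sum_subset (Finset.range_subset_range.2 (by omega))
        intro j _ hj
        rw [Finset.mem_range, not_lt] at hj
        apply Finset.sum_eq_zero
        intro k _
        simp only [hg]
        rw [Polynomial.coeff_eq_zero_of_natDegree_lt (show da < j by omega), zero_mul, zero_mul]

end Aux

section Unique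

variable {Fq F : Type*} [Field Fq] [Fintype Fq] [Field F] [Fintype F] [Algebra Fq F]

lemma frob_add (q : ℕ) (hq : q = Fintype.card Fq) (x y : F) :
    (x + y) ^ q = x ^ q + y ^ q := by
  set p := ringChar Fq with hp
  haveI hcFq : CharP Fq p := ringChar.charP Fq
  haveI : Fact p.Prime := ⟨CharP.char_is_prime Fq p⟩
  haveI : CharP F p := charP_of_injective_algebraMap (algebraMap Fq F).injective p
  obtain ⟨n, hn, hcard⟩ := FiniteField.card Fq p
  rw [hq, hcard]
  exact add_pow_char_pow x y p n

lemma leval_smul_arg (q : ℕ) (hq : q = Fintype.card Fq) (P : Polynomial F) (c : Fq) (α : F) :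
    _root_.leval q P (c • α) = c • _root_.leval q P α := by
  unfold _root_.leval
  rw [Finset.smul_sum]
  apply Finset.sum_congr rfl
  intro i _
  rw [Algebra.smul_def, Algebra.smul_def, mul_pow, ← map_pow]
  subst hq
  rw [FiniteField.pow_card_pow]
  ring

lemma leval_vanishing {s : ℕ} {x : Fin s → F} (q : ℕ) (hq : q = Fintype.card Fq)
    (hx : LinearIndependent Fq x)
    (P : Polynomial F) (hd : P.degree < (s : ℕ)) (hv : ∀ i, _root_.leval q P (x i) = 0) :
    P = 0 := by
  classical
  have hq2 : 2 ≤ q := hq ▸ Fintype.one_lt_card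
  by_contra hP
  have hnd : P.natDegree < s := (Polynomial.natDegree_lt_iff_degree_lt hP).2 hd
  -- vanishing on the span
  have hspan : ∀ α ∈ Submodule.span Fq (Set.range x), _root_.leval q P α = 0 := by
    intro α hα
    induction hα using Submodule.span_induction with
    | mem a ha =>
      obtain ⟨i, rfl⟩ := ha
      exact hv i
    | zero => exact leval_zero_arg hq2 P
    | add a b _ _ iha ihb =>
      rw [leval_add_arg (frob_add q hq) P, iha, ihb, add_zero]
    | smul c a _ iha =>
      rw [leval_smul_arg q hq, iha, smul_zero]
  set Q : Polynomial F := ∑ i ∈ Finset.range (P.natDegree + 1),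
    Polynomial.C (P.coeff i) * Polynomial.X ^ q ^ i with hQ
  have hev : ∀ α : F, Q.eval α = _root_.leval q P α := by
    intro α
    rw [hQ, Polynomial.eval_finset_sum]
    unfold _root_.leval
    exact Finset.sum_congr rfl fun i _ => by simp
  have hQne : Q ≠ 0 := by
    intro h0
    have hco : Q.coeff (q ^ P.natDegree) = P.coeff P.natDegree := by
      rw [hQ, Polynomial.finset_sum_coeff]
      simp only [Polynomial.coeff_C_mul, Polynomial.coeff_X_pow, mul_ite, mul_one, mul_zero]
      rw [Finset.sum_eq_single P.natDegree]
      · rw [if_pos rfl]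
      · intro i _ hne
        rw [if_neg]
        intro hqe
        exact hne (Nat.pow_right_injective hq2 hqe.symm)
      · intro h; exact absurd (Finset.self_mem_range_succ _) h
    rw [h0, Polynomial.coeff_zero] at hco
    exact hP (Polynomial.leadingCoeff_eq_zero.mp hco.symm)
  have hQd : Q.natDegree ≤ q ^ P.natDegree := by
    rw [hQ]
    apply Polynomial.natDegree_sum_le_of_forall_le
    intro i hi
    exact (Polynomial.natDegree_C_mul_X_pow_le _ _).trans
      (Nat.pow_le_pow_right (by omega) (Nat.lt_succ_iff.mp (Finset.mem_range.mp hi)))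
  haveI : Fintype ↥(Submodule.span Fq (Set.range x)) := Fintype.ofFinite _
  have hcardspan : Fintype.card ↥(Submodule.span Fq (Set.range x)) = q ^ s := by
    rw [hq, Module.card_eq_pow_finrank (K := Fq), finrank_span_eq_card hx, Fintype.card_fin]
  apply hQne
  apply Polynomial.eq_zero_of_natDegree_lt_card_of_eval_eq_zero Q
    (f := fun v : ↥(Submodule.span Fq (Set.range x)) => (v : F)) Subtype.val_injective
  · intro v; rw [hev]; exact hspan v v.2
  · rw [hcardspan]
    exact lt_of_le_of_lt hQd (Nat.pow_lt_pow_right (by omega) hnd)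

end Unique

/-- Interpolation recursion: with `t = ⌊s/2⌋`, `A = ⟨x₁,…,x_t⟩`, `B = ⟨x_{t+1},…,x_s⟩`,
`x̃ᵢ = M_B(xᵢ)` for `i ≤ t` and `x̃ᵢ = M_A(xᵢ)` for `i > t`, the interpolation
polynomial satisfies `I = I₁·M_B + I₂·M_A`. -/
theorem interpolation_recursion
    (Fq F : Type*) [Field Fq] [Fintype Fq] [Field F] [Fintype F] [Algebra Fq F]
    (q : ℕ) (hq : q = Fintype.card Fq)
    (s : ℕ) (x y : Fin s → F) (hx : LinearIndependent Fq x)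
    (t : ℕ) (ht : t = s / 2)
    (MA MB : Polynomial F)
    (hMA : IsMSP Fq q (Submodule.span Fq {α : F | ∃ i : Fin s, (i : ℕ) < t ∧ x i = α}) MA)
    (hMB : IsMSP Fq q (Submodule.span Fq {α : F | ∃ i : Fin s, t ≤ (i : ℕ) ∧ x i = α}) MB)
    (xt : Fin s → F)
    (hxt : ∀ i : Fin s,
      xt i = if (i : ℕ) < t then leval q MB (x i) else leval q MA (x i))
    (I I1 I2 : Polynomial F)
    (hId : I.degree < (s : ℕ)) (hIv : ∀ i : Fin s, leval q I (x i) = y i)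
    (hI1d : I1.degree < (t : ℕ))
    (hI1v : ∀ i : Fin s, (i : ℕ) < t → leval q I1 (xt i) = y i)
    (hI2d : I2.degree < ((s - t : ℕ) : WithBot ℕ))
    (hI2v : ∀ i : Fin s, t ≤ (i : ℕ) → leval q I2 (xt i) = y i) :
    I = lmul q I1 MB + lmul q I2 MA := by
  classical
  have hq2 : 2 ≤ q := hq ▸ Fintype.one_lt_card
  have hadd := frob_add (F := F) q hq
  have hts : t ≤ s := by omega
  -- the defining sets of A and B are ranges
  have hAset : {α : F | ∃ i : Fin s, (i : ℕ) < t ∧ x i = α}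
      = Set.range (fun i : {i : Fin s // (i : ℕ) < t} => x i) := by
    ext α
    constructor
    · rintro ⟨i, hi, rfl⟩; exact ⟨⟨i, hi⟩, rfl⟩
    · rintro ⟨⟨i, hi⟩, rfl⟩; exact ⟨i, hi, rfl⟩
  have hBset : {α : F | ∃ i : Fin s, t ≤ (i : ℕ) ∧ x i = α}
      = Set.range (fun i : {i : Fin s // t ≤ (i : ℕ)} => x i) := by
    ext α
    constructor
    · rintro ⟨i, hi, rfl⟩; exact ⟨⟨i, hi⟩, rfl⟩
    · rintro ⟨⟨i, hi⟩, rfl⟩; exact ⟨i, hi, rfl⟩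
  have hcardA : Fintype.card {i : Fin s // (i : ℕ) < t} ≤ t := by
    simpa using
    Fintype.card_le_of_injective (fun i : {i : Fin s // (i : ℕ) < t} => (⟨((i : Fin s) : ℕ), i.2⟩ : Fin t))
      (by
        intro i j h
        have h' := congrArg Fin.val h
        simp only at h'
        exact Subtype.ext (Fin.ext h'))

  have hcardB : Fintype.card {i : Fin s // t ≤ (i : ℕ)} ≤ s - t := by
    simpa using
    Fintype.card_le_of_injective
      (fun i : {i : Fin s // t ≤ (i : ℕ)} =>
        (⟨((i : Fin s) : ℕ) - t, by have := (i : Fin s).isLt; have := i.2; omega⟩ :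
        Fin (s - t)))
      (by
        intro i j h
        have h' := congrArg Fin.val h
        simp only at h'
        have hi := i.2
        have hj := j.2
        exact Subtype.ext (Fin.ext (by omega)))
  have hMAdeg : MA.natDegree ≤ t := by
    rw [hMA.2.1, hAset]
    exact (finrank_range_le_card _).trans hcardA
  have hMBdeg : MB.natDegree ≤ s - t := by
    rw [hMB.2.1, hBset]
    exact (finrank_range_le_card _).trans hcardB
  have hdeg1 : (lmul q I1 MB).degree < ((s : ℕ) : WithBot ℕ) := by
    rcases eq_or_ne I1 0 with h1 | h1
    · rw [h1, lmul_zero_left, Polynomial.degree_zero]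
      exact WithBot.bot_lt_coe s
    · have h1d : I1.natDegree < t := (Polynomial.natDegree_lt_iff_degree_lt h1).2 hI1d
      have hlt : (lmul q I1 MB).natDegree < s :=
        lt_of_le_of_lt (natDegree_lmul_le I1 MB) (by omega)
      calc (lmul q I1 MB).degree ≤ ((lmul q I1 MB).natDegree : WithBot ℕ) :=
            Polynomial.degree_le_natDegree
        _ < ((s : ℕ) : WithBot ℕ) := by exact_mod_cast hlt
  have hdeg2 : (lmul q I2 MA).degree < ((s : ℕ) : WithBot ℕ) := by
    rcases eq_or_ne I2 0 with h2 | h2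
    · rw [h2, lmul_zero_left, Polynomial.degree_zero]
      exact WithBot.bot_lt_coe s
    · have h2d : I2.natDegree < s - t := (Polynomial.natDegree_lt_iff_degree_lt h2).2 hI2d
      have hlt : (lmul q I2 MA).natDegree < s :=
        lt_of_le_of_lt (natDegree_lmul_le I2 MA) (by omega)
      calc (lmul q I2 MA).degree ≤ ((lmul q I2 MA).natDegree : WithBot ℕ) :=
            Polynomial.degree_le_natDegree
        _ < ((s : ℕ) : WithBot ℕ) := by exact_mod_cast hlt
  have hdegD : (I - (lmul q I1 MB + lmul q I2 MA)).degree < ((s : ℕ) : WithBot ℕ) :=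
    lt_of_le_of_lt (Polynomial.degree_sub_le _ _)
      (max_lt hId (lt_of_le_of_lt (Polynomial.degree_add_le _ _) (max_lt hdeg1 hdeg2)))
  have hvals : ∀ i, leval q (I - (lmul q I1 MB + lmul q I2 MA)) (x i) = 0 := by
    intro i
    rw [leval_sub, leval_add, leval_lmul hq2 hadd, leval_lmul hq2 hadd, hIv]
    rcases lt_or_ge ((i : ℕ)) t with hi | hi
    · have hxA : x i ∈ Submodule.span Fq {α : F | ∃ j : Fin s, (j : ℕ) < t ∧ x j = α} :=
        Submodule.subset_span ⟨i, hi, rfl⟩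
      have hMAz : leval q MA (x i) = 0 := (hMA.2.2 _).2 hxA
      have hMBx : leval q MB (x i) = xt i := by rw [hxt i, if_pos hi]
      rw [hMAz, hMBx, leval_zero_arg hq2, hI1v i hi, add_zero, sub_self]
    · have hxB : x i ∈ Submodule.span Fq {α : F | ∃ j : Fin s, t ≤ (j : ℕ) ∧ x j = α} :=
        Submodule.subset_span ⟨i, hi, rfl⟩
      have hMBz : leval q MB (x i) = 0 := (hMB.2.2 _).2 hxB
      have hMAx : leval q MA (x i) = xt i := by rw [hxt i, if_neg (not_lt.2 hi)]
      rw [hMBz, hMAx, leval_zero_arg hq2, hI2v i hi, zero_add, sub_self]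
  exact sub_eq_zero.mp (leval_vanishing q hq hx _ hdegD hvals)
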